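/- In a chain graph C, if there exists a partially directed path from y to x, then there exists a partially directed path from y to x of the form y − u_1 − ⋯ − u_k → ⋯ → x in which all edges before some index are undirected and all edges after that index are directed, provided additionally that C is a completed PDAG (satisfies the property that no induced subgraph w → u − v with w, v nonadjacent occurs, and for any length-two configuration with a directed edge followed by an undirected edge among pairwise-ordered vertices the endpoints are adjacent appropriately). Formally: every minimal-length partially directed path from y to x in a completed PDAG C has the property that no directed edge is immediately followed by an undirected edge along the path. -/

import Mathlib

structure MixedGraph (V : Type*) where
  dir : V → V → Prop
  undir : V → V → Prop
  undir_symm : ∀ x y, undir x y → undir y x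
  dir_irrefl : ∀ x, ¬ dir x x
  undir_irrefl : ∀ x, ¬ undir x x
  dir_asymm : ∀ x y, dir x y → ¬ dir y x
  not_both : ∀ x y, dir x y → ¬ undir x y

namespace MixedGraph

variable {V : Type*} (G : MixedGraph V)

/-- `a` and `b` are joined by some edge, oriented from `a` to `b` if directed. -/
def edge (a b : V) : Prop := G.dir a b ∨ G.undir a b

/-- `a` and `b` are adjacent (joined by a directed or undirected edge). -/
def adj (a b : V) : Prop := G.dir a b ∨ G.dir b a ∨ G.undir a b

/-- The consecutive (cyclic) pairs of the cycle `v :: l`. -/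
def cyclePairs (v : V) (l : List V) : List (V × V) := (v :: l).zip (l ++ [v])

/-- `v :: l` is a partially directed cycle: at least two distinct vertices, every
cyclically consecutive pair joined by an edge (directed forward or undirected),
and at least one such edge directed. -/
def IsPDCycle (v : V) (l : List V) : Prop :=
  l ≠ [] ∧ (v :: l).Nodup ∧
  (∀ p ∈ cyclePairs v l, G.edge p.1 p.2) ∧
  (∃ p ∈ cyclePairs v l, G.dir p.1 p.2)

/-- A chain graph contains no partially directed cycle. -/
def IsChainGraph : Prop := ∀ (v : V) (l : List V), ¬ G.IsPDCycle v l

/-- `v :: l` is an undirected cycle of length at least 4. -/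
def IsUCycle (v : V) (l : List V) : Prop :=
  4 ≤ (v :: l).length ∧ (v :: l).Nodup ∧
  (∀ p ∈ cyclePairs v l, G.undir p.1 p.2)

/-- The cycle `v :: l` has a chord: an undirected edge between two vertices of the
cycle that is not one of the cycle's edges. -/
def HasChord (v : V) (l : List V) : Prop :=
  ∃ a b, a ∈ v :: l ∧ b ∈ v :: l ∧ G.undir a b ∧
    (a, b) ∉ cyclePairs v l ∧ (b, a) ∉ cyclePairs v l

/-- Every undirected cycle of length at least 4 has a chord; equivalently every
chain component induces a chordal undirected graph. -/
def IsChordalUndir : Prop := ∀ v l, G.IsUCycle v l → G.HasChord v l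

/-- No induced subgraph `w → u − v` with `w, v` nonadjacent. -/
def NoFlag : Prop := ∀ w u v, G.dir w u → G.undir u v → G.adj w v

/-- The directed edge `v → u` is strongly protected: it occurs in one of the four
protecting configurations. -/
def StronglyProtected (v u : V) : Prop :=
  (∃ w, G.dir w v ∧ ¬ G.adj w u) ∨
  (∃ w, G.dir w u ∧ w ≠ v ∧ ¬ G.adj v w) ∨
  (∃ w, G.dir v w ∧ G.dir w u) ∨
  (∃ w w₁, w ≠ w₁ ∧ G.undir v w ∧ G.undir v w₁ ∧ G.dir w u ∧ G.dir w₁ u ∧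
    ¬ G.adj w w₁)

/-- Andersson's characterization: a completed PDAG (essential graph) is a chain
graph with chordal chain components, no induced flag `w → u − v`, and all
directed edges strongly protected. -/
def IsCompletedPDAG : Prop :=
  G.IsChainGraph ∧ G.IsChordalUndir ∧ G.NoFlag ∧
  ∀ v u, G.dir v u → G.StronglyProtected v u

/-- The neighbour set of `v`: vertices joined to `v` by an undirected edge. -/
def nbhd (v : V) : Set V := {u | G.undir v u}

/-- The parent set of `v`: vertices with a directed edge into `v`. -/
def parents (v : V) : Set V := {u | G.dir u v}

end MixedGraph

/-- A partially directed path from `y` to `x`: a list of distinct vertices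
starting at `y`, ending at `x`, each consecutive pair joined by a directed edge
oriented forward or by an undirected edge. -/
def IsPDPath {V : Type*} (G : MixedGraph V) (l : List V) (y x : V) : Prop :=
  l.head? = some y ∧ l.getLast? = some x ∧ l.Nodup ∧ l.Chain' G.edge

/-- In a completed PDAG, along any minimal-length partially directed path from
`y` to `x`, a directed edge is never immediately followed by an undirected
edge; hence the path has the form `y − u₁ − ⋯ − u_k → ⋯ → x`. -/
theorem stmt8 {V : Type*} (G : MixedGraph V) (hG : G.IsCompletedPDAG)
    (y x : V) (l : List V) (hl : IsPDPath G l y x)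
    (hmin : ∀ l', IsPDPath G l' y x → l.length ≤ l'.length) :
    ∀ a b c : V, [a, b, c] <:+: l → G.dir a b → ¬ G.undir b c := by
  rintro a b c ⟨s, t, rfl⟩ hab hbc
  obtain ⟨hchain, hchordal, hflag, hsp⟩ := hG
  obtain ⟨hh, hlast, hnd, hch⟩ := hl
  simp only [List.append_assoc, List.cons_append, List.nil_append] at hh hlast hnd hch hmin
  have habc : ([a, b, c] : List V).Nodup :=
    hnd.sublist (List.IsInfix.sublist ⟨s, t, by simp⟩)
  have hab' : a ≠ b := by simp at habc; tauto
  have hbc' : b ≠ c := by simp at habc; tauto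
  have hac' : a ≠ c := by simp at habc; tauto
  -- adjacency from NoFlag
  have hadj := hflag a b c hab hbc
  -- an edge a→c or a−c would allow shortening the path, contradicting minimality
  have hshorten : ¬ G.edge a c := by
    intro hac
    have hsub : List.Sublist (s ++ a :: c :: t) (s ++ a :: b :: c :: t) :=
      (List.Sublist.refl s).append
        (List.Sublist.cons₂ a (List.Sublist.cons b (List.Sublist.refl (c :: t))))
    have hpd : IsPDPath G (s ++ a :: c :: t) y x := by
      refine ⟨?_, ?_, hnd.sublist hsub, ?_⟩
      · cases s with
        | nil => simpa using hh
        | cons z s' => simpa using hh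
      · rw [show s ++ a :: b :: c :: t = (s ++ [a, b]) ++ c :: t by simp] at hlast
        rw [show s ++ a :: c :: t = (s ++ [a]) ++ c :: t by simp]
        rw [List.getLast?_append_cons] at hlast ⊢
        exact hlast
      · rw [List.Chain', List.isChain_append] at hch ⊢
        obtain ⟨hs, hrest, hconn⟩ := hch
        rw [List.isChain_cons_cons, List.isChain_cons_cons] at hrest
        refine ⟨hs, List.isChain_cons_cons.mpr ⟨hac, hrest.2.2⟩, ?_⟩
        intro u hu v hv
        exact hconn u hu v (by simpa using hv)
    have := hmin _ hpd
    simp at this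
  -- so a ← c, giving a partially directed cycle a → b − c → a
  rcases hadj with h | h | h
  · exact hshorten (Or.inl h)
  · refine hchain a [b, c] ⟨by simp, habc, ?_, ⟨(a, b), ?_, hab⟩⟩
    · intro p hp
      simp only [MixedGraph.cyclePairs, List.zip, List.zipWith, List.cons_append,
        List.nil_append] at hp
      simp at hp
      rcases hp with rfl | rfl | rfl
      · exact Or.inl hab
      · exact Or.inr hbc
      · exact Or.inl h
    · simp [MixedGraph.cyclePairs]
  · exact hshorten (Or.inr h)
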